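/- (Derivatives of the generating function, eq. (37).) For every real number x, every i ≥ 0 and every n ≥ 0, the n-th Taylor coefficient at t = 0 of the i-th derivative (d/dt)^i (1 - 2tx + t²)^{-1/2} equals (n+i)_i · p_{n+i}(x), where p_k is the k-th Legendre polynomial. -/

import Mathlib

/-- The `n`-th Legendre polynomial, given by Rodrigues' formula
`p_n(x) = (1/(2^n n!))·(d/dx)^n [(x²-1)^n]`. -/
noncomputable def legendreP (n : ℕ) (x : ℝ) : ℝ :=
  (1 / (2 ^ n * (Nat.factorial n : ℝ))) * iteratedDeriv n (fun y : ℝ => (y ^ 2 - 1) ^ n) x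

section Aux
open Polynomial Filter

noncomputable def RL (n : ℕ) : ℝ[X] := derivative^[n] ((X^2 - 1)^n)

lemma dadd (k : ℕ) (p q : ℝ[X]) :
    derivative^[k] (p + q) = derivative^[k] p + derivative^[k] q := by
  induction k generalizing p q with
  | zero => rfl
  | succ k ih => rw [Function.iterate_succ_apply, derivative_add, ih,
      Function.iterate_succ_apply, Function.iterate_succ_apply]

lemma dC2 : (2 : ℝ[X]) = C 2 := (map_ofNat C 2).symm

lemma dshift (k : ℕ) (p : ℝ[X]) :
    derivative^[k] (derivative p) = derivative^[k+1] p :=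
  (Function.iterate_succ_apply _ _ _).symm

lemma d2 (q : ℝ[X]) : derivative^[2] q = derivative (derivative q) := by
  rw [show (2:ℕ) = 1+1 from rfl, Function.iterate_succ_apply, Function.iterate_one]

lemma iterD_C_mul (c : ℝ) (k : ℕ) (p : ℝ[X]) :
    derivative^[k] (C c * p) = C c * derivative^[k] p := iterate_derivative_C_mul c p k

lemma iterD_two_mul (k : ℕ) (p : ℝ[X]) :
    derivative^[k] (2 * p) = 2 * derivative^[k] p := by
  rw [dC2]; exact iterD_C_mul 2 k p

lemma iterD_X_mul (m : ℕ) (p : ℝ[X]) :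
    derivative^[m+1] (X * p) =
      X * derivative^[m+1] p + ((m : ℝ[X]) + 1) * derivative^[m] p := by
  induction m generalizing p with
  | zero => simp [derivative_mul]; ring
  | succ m ih =>
    have h : derivative^[m+2] (X*p) = derivative^[m+1] (derivative (X*p)) :=
      Function.iterate_succ_apply _ _ _
    rw [h, derivative_mul, derivative_X, one_mul, dadd, ih (derivative p),
      dshift, dshift]
    push_cast
    ring

lemma iterD_quad_mul (m : ℕ) (p : ℝ[X]) :
    derivative^[m+2] ((X^2 - 1) * p) =
      (X^2 - 1) * derivative^[m+2] p + 2*((m : ℝ[X])+2) * X * derivative^[m+1] p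
        + ((m : ℝ[X])+2) * ((m : ℝ[X])+1) * derivative^[m] p := by
  have h1 : ∀ q : ℝ[X], derivative ((X^2 - 1 : ℝ[X]) * q) =
      (X^2-1) * derivative q + X * (2 * q) := by
    intro q; simp [derivative_mul, map_ofNat]; ring
  induction m generalizing p with
  | zero =>
    rw [show (0:ℕ)+2 = 2 from rfl, d2, h1, derivative_add, h1, derivative_mul,
      derivative_mul, derivative_X]
    simp only [Nat.cast_zero, ← d2, Function.iterate_one, Function.iterate_zero_apply]
    simp [map_ofNat]
    ring
  | succ m ih =>
    have h : derivative^[m+3] ((X^2-1)*p) = derivative^[m+2] (derivative ((X^2-1)*p)) :=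
      Function.iterate_succ_apply _ _ _
    rw [show m+1+2 = m+3 from rfl, h, h1, dadd, ih (derivative p), iterD_X_mul (m+1),
      dshift, dshift, dshift, iterD_two_mul, iterD_two_mul]
    push_cast
    ring

lemma du (k : ℕ) : derivative (((X:ℝ[X])^2 - 1)^(k+1))
    = ((2*k+2 : ℕ) : ℝ[X]) * (X * ((X:ℝ[X])^2-1)^k) := by
  rw [derivative_pow]
  simp [map_ofNat]
  push_cast
  ring

lemma RL_succ_eq (m : ℕ) :
    RL (m+2) = ((2*m+4 : ℕ) : ℝ[X]) * (X * RL (m+1) + ((m:ℝ[X])+1) * derivative^[m] (((X:ℝ[X])^2-1)^(m+1))) := by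
  have h : RL (m+2) = derivative^[m+1] (derivative (((X:ℝ[X])^2-1)^(m+2))) := by
    simp only [RL, Function.iterate_succ_apply]
  rw [h, show m+2 = (m+1)+1 from rfl, du (m+1), iterate_derivative_natCast_mul,
    iterD_X_mul m]
  simp only [RL]
  push_cast
  ring

lemma RL_succ_eq' (m : ℕ) :
    RL (m+2) = (X^2-1) * derivative (RL (m+1)) + 2*((m:ℝ[X])+2) * X * RL (m+1)
        + ((m:ℝ[X])+2) * ((m:ℝ[X])+1) * derivative^[m] (((X:ℝ[X])^2-1)^(m+1)) := by
  have h : RL (m+2) = derivative^[m+2] ((X^2-1) * ((X:ℝ[X])^2-1)^(m+1)) := by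
    simp only [RL]
    rw [← pow_succ']
  rw [h, iterD_quad_mul m]
  have e1 : derivative^[m+2] (((X:ℝ[X])^2-1)^(m+1)) = derivative (RL (m+1)) := by
    simp only [RL, Function.iterate_succ_apply']
  have e2 : derivative^[m+1] (((X:ℝ[X])^2-1)^(m+1)) = RL (m+1) := rfl
  rw [e1, e2]

lemma bonnetIII (n : ℕ) :
    RL (n+1) = 2*(X^2-1) * derivative (RL n) + 2*((n:ℝ[X])+1) * X * RL n := by
  cases n with
  | zero =>
    simp only [RL, pow_zero, pow_one, Function.iterate_one, Function.iterate_zero_apply,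
      Nat.cast_zero]
    simp [map_ofNat]
    exact one_add_one_eq_two
  | succ m =>
    have I := RL_succ_eq m
    have II := RL_succ_eq' m
    push_cast at I II ⊢
    linear_combination 2 * II - I

lemma legODE (n : ℕ) :
    (X^2-1) * derivative (derivative (RL n)) + 2 * X * derivative (RL n)
      = (n:ℝ[X])*((n:ℝ[X])+1) * RL n := by
  cases n with
  | zero => simp [RL]
  | succ m =>
    set u : ℝ[X] := ((X:ℝ[X])^2-1)^(m+1) with hu
    have E : (X^2-1) * derivative u = ((2*m+2:ℕ):ℝ[X]) * (X * u) := by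
      rw [hu, du m, pow_succ]
      ring
    have hL := congrArg (fun p => derivative^[m+2] p) E
    rw [iterD_quad_mul m, iterate_derivative_natCast_mul, iterD_X_mul (m+1)] at hL
    have c1 : derivative^[m] (derivative u) = RL (m+1) := dshift m u
    have c2 : derivative^[m+1] (derivative u) = derivative (RL (m+1)) := by
      rw [dshift]; exact Function.iterate_succ_apply' _ _ _
    have c3 : derivative^[m+2] (derivative u) = derivative (derivative (RL (m+1))) := by
      rw [dshift]
      show derivative^[(m+1)+1+1] u = _
      rw [Function.iterate_succ_apply', Function.iterate_succ_apply']
      rfl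
    have c4 : derivative^[m+2] u = derivative (RL (m+1)) :=
      Function.iterate_succ_apply' _ _ _
    have c5 : derivative^[m+1] u = RL (m+1) := rfl
    rw [c1, c2, c3, c4, c5] at hL
    push_cast at hL ⊢
    linear_combination hL

lemma legV (n : ℕ) :
    (X^2-1) * derivative (RL (n+1))
      = ((n:ℝ[X])+1) * X * RL (n+1) - 2*((n:ℝ[X])+1)^2 * RL n := by
  induction n with
  | zero =>
    have h1 : RL 1 = 2 * X := by
      simp [RL, map_ofNat]
      exact one_add_one_eq_two
    have h0 : RL 0 = 1 := by simp [RL]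
    rw [h1, h0]
    simp [map_ofNat]
    ring
  | succ m ih =>
    have hD := congrArg derivative (bonnetIII (m+1))
    simp only [derivative_add, derivative_mul, derivative_sub, derivative_one,
      derivative_X_pow, derivative_X, derivative_ofNat, Nat.cast_ofNat,
      derivative_natCast, map_ofNat] at hD
    have L := legODE (m+1)
    have Bb := bonnetIII (m+1)
    push_cast at hD L Bb ⊢
    linear_combination (X^2-1) * hD + 2*(X^2-1) * L - ((m:ℝ[X])+2) * X * Bb

lemma bonnetB (n : ℕ) :
    RL (n+2) = (4*(n:ℝ[X])+6) * X * RL (n+1) - 4*((n:ℝ[X])+1)^2 * RL n := by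
  have h1 := bonnetIII (n+1)
  have h2 := legV n
  push_cast at h1 h2 ⊢
  linear_combination h1 + 2 * h2

noncomputable def gf (x : ℝ) : ℝ → ℝ := fun t => (1 - 2*t*x + t^2) ^ (-(1:ℝ)/2)

def UU (x : ℝ) : Set ℝ := {t | 0 < 1 - 2*t*x + t^2}

lemma UU_open (x : ℝ) : IsOpen (UU x) :=
  isOpen_lt continuous_const (by continuity)

lemma UU_mem0 (x : ℝ) : (0:ℝ) ∈ UU x := by simp [UU]

lemma gf_contDiffOn (x : ℝ) : ContDiffOn ℝ (⊤:ℕ∞) (gf x) (UU x) := by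
  intro t ht
  apply ContDiffAt.contDiffWithinAt
  have hq : ContDiffAt ℝ (⊤:ℕ∞) (fun t:ℝ => 1 - 2*t*x + t^2) t := by
    apply ContDiffAt.add
    · exact ContDiffAt.sub contDiffAt_const (by fun_prop)
    · fun_prop
  have hr : ContDiffAt ℝ (⊤:ℕ∞) (fun y:ℝ => y ^ (-(1:ℝ)/2)) (1 - 2*t*x + t^2) :=
    Real.contDiffAt_rpow_const_of_ne (ne_of_gt ht)
  exact hr.comp t hq

lemma gf_hasDerivAt (x : ℝ) {t : ℝ} (ht : t ∈ UU x) :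
    HasDerivAt (gf x) ((x - t) * (1 - 2*t*x + t^2) ^ (-(3:ℝ)/2)) t := by
  have hq : HasDerivAt (fun t:ℝ => 1 - 2*t*x + t^2) (-(2*x) + 2*t) t := by
    have h1 : HasDerivAt (fun t:ℝ => 1 - 2*t*x) (-(2*x)) t := by
      have := ((hasDerivAt_id t).const_mul (2*x)).const_sub 1
      simpa [mul_comm, mul_assoc, mul_left_comm] using this
    have h2 : HasDerivAt (fun t:ℝ => t^2) (2*t) t := by simpa using hasDerivAt_pow 2 t
    have := h1.add h2
    exact this
  have h := hq.rpow_const (p := -(1:ℝ)/2) (Or.inl (ne_of_gt ht))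
  convert h using 1
  · rfl
  rw [show (-(1:ℝ)/2 - 1) = -(3:ℝ)/2 by norm_num]
  ring

lemma gf_ode (x : ℝ) {t : ℝ} (ht : t ∈ UU x) :
    (1 - 2*t*x + t^2) * deriv (gf x) t = (x - t) * gf x t := by
  rw [(gf_hasDerivAt x ht).deriv, gf]
  rw [show (-(1:ℝ)/2) = -(3:ℝ)/2 + 1 by norm_num, Real.rpow_add_one (ne_of_gt ht)]
  ring

lemma contDiffOn_iterD {f : ℝ → ℝ} {U : Set ℝ} (hU : IsOpen U)
    (hf : ContDiffOn ℝ (⊤:ℕ∞) f U) (k : ℕ) : ContDiffOn ℝ (⊤:ℕ∞) (iteratedDeriv k f) U := by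
  induction k with
  | zero => simpa [iteratedDeriv_zero]
  | succ k ih =>
    rw [iteratedDeriv_succ]
    exact ih.deriv_of_isOpen hU (by simp)

lemma hasDerivAt_iterD {f : ℝ → ℝ} {U : Set ℝ} (hU : IsOpen U)
    (hf : ContDiffOn ℝ (⊤:ℕ∞) f U) (k : ℕ) {t : ℝ} (ht : t ∈ U) :
    HasDerivAt (iteratedDeriv k f) (iteratedDeriv (k+1) f t) t := by
  have hd : DifferentiableAt ℝ (iteratedDeriv k f) t :=
    (((contDiffOn_iterD hU hf k).differentiableOn (by simp)).differentiableAt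
      (hU.mem_nhds ht))
  have := hd.hasDerivAt
  rwa [show deriv (iteratedDeriv k f) t = iteratedDeriv (k+1) f t by
    rw [iteratedDeriv_succ]] at this

lemma evIter {f₁ f₂ : ℝ → ℝ} {a : ℝ} (h : f₁ =ᶠ[nhds a] f₂) (n : ℕ) :
    iteratedDeriv n f₁ =ᶠ[nhds a] iteratedDeriv n f₂ := by
  induction n with
  | zero => simpa [iteratedDeriv_zero]
  | succ n ih => rw [iteratedDeriv_succ, iteratedDeriv_succ]; exact ih.deriv

lemma iterD_mul_quad {g : ℝ → ℝ} {U : Set ℝ} (hU : IsOpen U)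
    (hg : ContDiffOn ℝ (⊤:ℕ∞) g U) (a b c : ℝ) (n : ℕ) :
    ∀ t ∈ U, iteratedDeriv (n+1) (fun s => (a + b*s + c*s^2) * g s) t
      = (a + b*t + c*t^2) * iteratedDeriv (n+1) g t
        + ((n:ℝ)+1) * ((b + 2*c*t) * iteratedDeriv n g t)
        + (((n:ℝ)+1)*(n:ℝ)) * (c * iteratedDeriv (n-1) g t) := by
  have hP : ∀ t : ℝ, HasDerivAt (fun s:ℝ => a + b*s + c*s^2) (b + 2*c*t) t := by
    intro t
    have h1 : HasDerivAt (fun s:ℝ => b*s) b t := by simpa using (hasDerivAt_id t).const_mul b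
    have h2 : HasDerivAt (fun s:ℝ => c*s^2) (c*(2*t)) t := by
      simpa using (hasDerivAt_pow 2 t).const_mul c
    have := ((hasDerivAt_const t a).add h1).add h2
    refine this.congr_deriv ?_
    ring
  have hP' : ∀ t : ℝ, HasDerivAt (fun s:ℝ => b + 2*c*s) (2*c) t := by
    intro t
    simpa using ((hasDerivAt_id t).const_mul (2*c)).const_add b
  induction n with
  | zero =>
    intro t ht
    rw [iteratedDeriv_one]
    have hg0 : HasDerivAt g (iteratedDeriv 1 g t) t := by
      simpa [iteratedDeriv_zero] using hasDerivAt_iterD hU hg 0 ht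
    have := ((hP t).mul hg0).deriv
    erw [this]
    simp [iteratedDeriv_zero]
    ring
  | succ n ih =>
    intro t ht
    rw [iteratedDeriv_succ]
    have hev : iteratedDeriv (n+1) (fun s => (a + b*s + c*s^2) * g s) =ᶠ[nhds t]
        (fun s => (a + b*s + c*s^2) * iteratedDeriv (n+1) g s
          + ((n:ℝ)+1) * ((b + 2*c*s) * iteratedDeriv n g s)
          + (((n:ℝ)+1)*(n:ℝ)) * (c * iteratedDeriv (n-1) g s)) :=
      eventually_of_mem (hU.mem_nhds ht) (fun s hs => ih s hs)
    rw [hev.deriv_eq]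
    have hG2 := hasDerivAt_iterD hU hg (n+1) ht
    have hG1 := hasDerivAt_iterD hU hg n ht
    have hG0 := hasDerivAt_iterD hU hg (n-1) ht
    have hder :=
      ((((hP t).mul hG2).add (((hP' t).mul hG1).const_mul ((n:ℝ)+1))).add
        ((hG0.const_mul c).const_mul (((n:ℝ)+1)*(n:ℝ)))).deriv
    erw [hder]
    cases n with
    | zero => push_cast; simp; ring
    | succ m =>
      simp only [show m+1-1 = m from rfl, show m+1+1-1 = m+1 from rfl]
      push_cast
      ring


lemma evalIter (p : ℝ[X]) (m : ℕ) (x : ℝ) :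
    iteratedDeriv m (fun y => p.eval y) x = (derivative^[m] p).eval x := by
  induction m generalizing p with
  | zero => simp
  | succ m ih =>
    rw [iteratedDeriv_succ']
    have hd : deriv (fun y => p.eval y) = fun y => (derivative p).eval y :=
      funext fun y => (p.hasDerivAt y).deriv
    rw [hd, ih (derivative p), dshift]

lemma legendreP_eq (n : ℕ) (x : ℝ) :
    legendreP n x = (1 / (2^n * (n.factorial : ℝ))) * (RL n).eval x := by
  unfold legendreP
  congr 1
  have h : (fun y:ℝ => (y^2-1)^n) = fun y => (((X^2-1)^n : ℝ[X])).eval y := by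
    funext y; simp
  rw [h, evalIter]
  rfl

lemma legendreP_zero (x : ℝ) : legendreP 0 x = 1 := by
  simp [legendreP]

lemma legendreP_one (x : ℝ) : legendreP 1 x = x := by
  rw [legendreP_eq]
  have h1 : RL 1 = 2 * X := by simp [RL, map_ofNat]; exact one_add_one_eq_two
  rw [h1]
  simp [Nat.factorial]

lemma legendreP_rec (x : ℝ) (n : ℕ) :
    ((n:ℝ)+2) * legendreP (n+2) x
      = (2*(n:ℝ)+3)*x*legendreP (n+1) x - ((n:ℝ)+1) * legendreP n x := by
  have hB := congrArg (Polynomial.eval x) (bonnetB n)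
  simp only [eval_mul, eval_add, eval_sub, eval_pow, eval_X, eval_one, eval_ofNat,
    eval_natCast, map_ofNat] at hB
  rw [legendreP_eq, legendreP_eq, legendreP_eq, hB]
  rw [show n+2 = (n+1)+1 from rfl, Nat.factorial_succ (n+1), Nat.factorial_succ n]
  simp only [pow_succ]
  have h2 : (2:ℝ)^n ≠ 0 := by positivity
  have hf : ((n.factorial : ℝ)) ≠ 0 := Nat.cast_ne_zero.mpr n.factorial_ne_zero
  push_cast
  field_simp
  ring

lemma gf_rec (x : ℝ) (n : ℕ) :
    iteratedDeriv (n+2) (gf x) 0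
      = (2*(n:ℝ)+3)*x*iteratedDeriv (n+1) (gf x) 0
        - ((n:ℝ)+1)^2 * iteratedDeriv n (gf x) 0 := by
  have hU := UU_open x
  have h0 := UU_mem0 x
  have hgf := gf_contDiffOn x
  have hdg : ContDiffOn ℝ (⊤:ℕ∞) (deriv (gf x)) (UU x) := hgf.deriv_of_isOpen hU (by simp)
  have hev : (fun s => (1 + (-(2*x))*s + 1*s^2) * deriv (gf x) s) =ᶠ[nhds 0]
      (fun s => (x + (-1)*s + 0*s^2) * gf x s) := by
    apply eventually_of_mem (hU.mem_nhds h0)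
    intro t ht
    have h := gf_ode x ht
    simp only []
    have e1 : 1 + (-(2*x))*t + 1*t^2 = 1 - 2*t*x + t^2 := by ring
    rw [e1, h]; ring
  have hE := (evIter hev (n+1)).self_of_nhds
  rw [iterD_mul_quad hU hdg 1 (-(2*x)) 1 n 0 h0,
    iterD_mul_quad hU hgf x (-1) 0 n 0 h0] at hE
  have sh : ∀ k : ℕ, iteratedDeriv k (deriv (gf x)) = iteratedDeriv (k+1) (gf x) :=
    fun k => (iteratedDeriv_succ' ..).symm
  rw [sh, sh, sh] at hE
  cases n with
  | zero =>
    norm_num at hE ⊢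
    linarith [hE]
  | succ m =>
    rw [show m+1-1 = m from rfl] at hE
    push_cast at hE ⊢
    linear_combination hE

lemma gf_zero (x : ℝ) : gf x 0 = 1 := by
  have : (1 - 2*(0:ℝ)*x + (0:ℝ)^2) = 1 := by ring
  rw [gf, this, Real.one_rpow]

lemma gf_one (x : ℝ) : iteratedDeriv 1 (gf x) 0 = x := by
  rw [iteratedDeriv_one, (gf_hasDerivAt x (UU_mem0 x)).deriv]
  have : (1 - 2*(0:ℝ)*x + (0:ℝ)^2) = 1 := by ring
  rw [this, Real.one_rpow]
  ring

lemma gf_coeff (x : ℝ) : ∀ m : ℕ, iteratedDeriv m (gf x) 0 = (m.factorial:ℝ) * legendreP m x := by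
  intro m
  induction m using Nat.twoStepInduction with
  | zero => simpa [iteratedDeriv_zero, legendreP_zero] using gf_zero x
  | one => simp [gf_one, legendreP_one, Nat.factorial]
  | more n ih1 ih2 =>
    rw [gf_rec, ih1, ih2]
    have hPrec := legendreP_rec x n
    rw [show n+2 = (n+1)+1 from rfl, Nat.factorial_succ (n+1), Nat.factorial_succ n]
    push_cast
    linear_combination (-(((n:ℝ)+1) * (n.factorial:ℝ))) * hPrec

lemma iterD_comp (f : ℝ → ℝ) (i n : ℕ) :
    iteratedDeriv n (iteratedDeriv i f) = iteratedDeriv (n+i) f := by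
  induction n with
  | zero => simp
  | succ n ih =>
    rw [iteratedDeriv_succ, ih, show n+1+i = (n+i)+1 by omega, iteratedDeriv_succ]

lemma descFac (n i : ℕ) : (n+i).descFactorial i * n.factorial = (n+i).factorial := by
  induction i with
  | zero => simp
  | succ i ih =>
    rw [show n+(i+1) = (n+i)+1 from rfl, Nat.succ_descFactorial_succ, mul_assoc, ih,
      Nat.factorial_succ]

end Aux

/-- Derivatives of the generating function (eq. (37)): for every real `x` and all
`i, n ≥ 0`, the `n`-th Taylor coefficient at `t = 0` of
`(d/dt)^i (1 - 2tx + t²)^(-1/2)` equals `(n+i)_i · p_{n+i}(x)`. -/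
theorem legendre_generating_function_deriv (x : ℝ) (i n : ℕ) :
    iteratedDeriv n
        (iteratedDeriv i (fun t : ℝ => (1 - 2 * t * x + t ^ 2) ^ (-(1 : ℝ) / 2))) 0
        / (Nat.factorial n : ℝ)
      = (Nat.descFactorial (n + i) i : ℝ) * legendreP (n + i) x := by
  have h1 : (fun t : ℝ => (1 - 2 * t * x + t ^ 2) ^ (-(1 : ℝ) / 2)) = gf x := rfl
  rw [h1, iterD_comp, gf_coeff x (n+i)]
  have hd : ((n+i).factorial : ℝ) = ((n+i).descFactorial i : ℝ) * (n.factorial : ℝ) := by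
    exact_mod_cast (descFac n i).symm
  rw [hd]
  have hf : ((n.factorial : ℝ)) ≠ 0 := Nat.cast_ne_zero.mpr n.factorial_ne_zero
  field_simp
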